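/- Let m > 6 and let D be a set of exactly m−1 unordered pairs of distinct elements of {1, …, m} (i.e., m−1 edges of the complete graph K_m) such that D is not the star of any vertex (there is no v with D = {{v, w} : w ∈ {1,…,m}, w ≠ v}). Then the vectors e_i + e_j ∈ ℝ^m, over all unordered pairs {i, j} with i ≠ j and {i, j} ∉ D, span ℝ^m (where e_1, …, e_m is the standard basis of ℝ^m). -/

import Mathlib

open Finset

set_option linter.unnecessarySeqFocus false

/-- Some vertex meets at most one deleted edge. -/
lemma rem_exists_low_degree (m : ℕ) (hm : 6 < m) (D : Finset (Sym2 (Fin m)))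
    (hDedges : ∀ p ∈ D, ¬p.IsDiag) (hcard : D.card = m - 1) :
    ∃ v : Fin m, (D.filter (fun p => v ∈ p)).card ≤ 1 := by
  classical
  by_contra hno
  push_neg at hno
  have key : ∀ p ∈ D, (Finset.univ.filter (fun v : Fin m => v ∈ p)).card = 2 := by
    intro p hp
    induction p using Sym2.inductionOn with
    | hf x y =>
      have hne : x ≠ y := by
        have := hDedges _ hp; rwa [Sym2.mk_isDiag_iff] at this
      have : (Finset.univ.filter (fun v => v ∈ s(x,y))) = {x, y} := by
        ext v; simp [Sym2.mem_iff]
      rw [this, Finset.card_pair hne]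
  have hsum : ∑ v : Fin m, (D.filter (fun p => v ∈ p)).card
      = ∑ p ∈ D, (Finset.univ.filter (fun v : Fin m => v ∈ p)).card := by
    simp only [Finset.card_filter]
    rw [Finset.sum_comm]
  have h1 : 2 * m ≤ ∑ v : Fin m, (D.filter (fun p => v ∈ p)).card := by
    calc 2 * m = ∑ _v : Fin m, 2 := by simp [mul_comm]
    _ ≤ _ := Finset.sum_le_sum fun v _ => hno v
  have h2 : ∑ p ∈ D, (Finset.univ.filter (fun v : Fin m => v ∈ p)).card = 2 * (m-1) := by
    rw [Finset.sum_congr rfl key]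
    simp [hcard, mul_comm]
  omega

/-- From a vertex meeting at most one deleted edge, extract a surviving triangle. -/
lemma rem_exists_triangle_at (m : ℕ) (hm : 6 < m) (D : Finset (Sym2 (Fin m)))
    (hcard : D.card = m - 1)
    (v : Fin m) (hv : (D.filter (fun p => v ∈ p)).card ≤ 1) :
    ∃ y z : Fin m, y ≠ z ∧ v ≠ y ∧ v ≠ z ∧ s(v,y) ∉ D ∧ s(v,z) ∉ D ∧ s(y,z) ∉ D := by
  classical
  set N : Finset (Fin m) := Finset.univ.filter (fun w => w ≠ v ∧ s(v,w) ∉ D) with hN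
  have hNcard : m - 2 ≤ N.card := by
    have hbad : (Finset.univ.filter (fun w : Fin m => ¬(w ≠ v ∧ s(v,w) ∉ D))).card ≤ 2 := by
      have hsub : (Finset.univ.filter (fun w : Fin m => ¬(w ≠ v ∧ s(v,w) ∉ D)))
          ⊆ insert v (Finset.univ.filter (fun w : Fin m => s(v,w) ∈ D)) := by
        intro w hw
        simp only [mem_filter, mem_univ, true_and, not_and, not_not, ne_eq] at hw
        by_cases h : w = v
        · simp [h]
        · simp [mem_filter, hw h, h]
      have hinj : (Finset.univ.filter (fun w : Fin m => s(v,w) ∈ D)).card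
          ≤ (D.filter (fun p => v ∈ p)).card := by
        apply Finset.card_le_card_of_injOn (fun w => s(v,w))
        · intro w hw
          simp only [mem_coe, mem_filter, mem_univ, true_and] at hw ⊢
          exact ⟨hw, Sym2.mem_mk_left v w⟩
        · intro w _ w' _ h
          rw [Sym2.eq_iff] at h
          rcases h with ⟨-, h⟩ | ⟨h1, h2⟩
          · exact h
          · rw [← h1, h2]
      calc _ ≤ (insert v (Finset.univ.filter (fun w : Fin m => s(v,w) ∈ D))).card :=
              Finset.card_le_card hsub
        _ ≤ _ + 1 := Finset.card_insert_le _ _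
        _ ≤ 2 := by omega
    have := Finset.card_filter_add_card_filter_not
      (s := (Finset.univ : Finset (Fin m))) (p := fun w => w ≠ v ∧ s(v,w) ∉ D)
    simp only [Finset.card_univ, Fintype.card_fin] at this
    rw [← hN] at this
    omega
  -- now find a surviving pair inside N
  by_contra hno
  push_neg at hno
  have hpair : ∀ y ∈ N, ∀ z ∈ N, y ≠ z → s(y,z) ∈ D := by
    intro y hy z hz hyz
    by_contra hs
    simp only [hN, mem_filter, mem_univ, true_and] at hy hz
    exact hs (hno y z hyz (Ne.symm hy.1) (Ne.symm hz.1) hy.2 hz.2)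
  set P : Finset (Fin m × Fin m) := (N ×ˢ N).filter (fun q => q.1 ≠ q.2) with hP
  have hPcard : N.card * N.card = N.card + P.card := by
    have hdiag : ((N ×ˢ N).filter (fun q => q.1 = q.2)).card = N.card := by
      rw [show ((N ×ˢ N).filter (fun q => q.1 = q.2)) = N.image (fun x => (x,x)) by
        ext q; simp only [mem_filter, mem_product, mem_image]
        constructor
        · rintro ⟨⟨h1, h2⟩, h3⟩; exact ⟨q.1, h1, by simp [Prod.ext_iff, h3]⟩
        · rintro ⟨x, hx, rfl⟩; exact ⟨⟨hx, hx⟩, rfl⟩]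
      exact Finset.card_image_of_injective _ (fun a b h => (Prod.mk.injEq _ _ _ _ ▸ h).1)
    have := Finset.card_filter_add_card_filter_not
      (s := N ×ˢ N) (p := fun q : Fin m × Fin m => q.1 = q.2)
    rw [Finset.card_product, ← hP] at this
    omega
  have himg : P.image (fun q : Fin m × Fin m => s(q.1, q.2)) ⊆ D := by
    intro p hp
    simp only [mem_image] at hp
    obtain ⟨q, hq, rfl⟩ := hp
    simp only [hP, mem_filter, mem_product] at hq
    exact hpair _ hq.1.1 _ hq.1.2 hq.2
  have hfib : P.card ≤ 2 * (P.image (fun q : Fin m × Fin m => s(q.1, q.2))).card := by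
    apply Finset.card_le_mul_card_image
    intro b hb
    simp only [mem_image] at hb
    obtain ⟨a, ha, rfl⟩ := hb
    have : P.filter (fun q => s(q.1, q.2) = s(a.1, a.2)) ⊆ {(a.1, a.2), (a.2, a.1)} := by
      intro q hq
      simp only [mem_filter] at hq
      rw [Sym2.eq_iff] at hq
      rcases hq.2 with ⟨h1, h2⟩ | ⟨h1, h2⟩ <;> simp [Prod.ext_iff, h1, h2]
    calc _ ≤ ({(a.1, a.2), (a.2, a.1)} : Finset (Fin m × Fin m)).card := Finset.card_le_card this
      _ ≤ 2 := card_insert_le _ _ |>.trans (by simp)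
  have hfinal : N.card * N.card ≤ N.card + 2 * (m - 1) := by
    have := Finset.card_le_card himg
    omega
  have h5 : 5 ≤ N.card := by omega
  have h6 : m - 1 ≤ N.card + 1 := by omega
  nlinarith [hfinal, h5, h6]

/-- A surviving triangle exists. -/
lemma rem_exists_triangle (m : ℕ) (hm : 6 < m) (D : Finset (Sym2 (Fin m)))
    (hDedges : ∀ p ∈ D, ¬p.IsDiag) (hcard : D.card = m - 1) :
    ∃ a b c : Fin m, a ≠ b ∧ a ≠ c ∧ b ≠ c ∧ s(a,b) ∉ D ∧ s(a,c) ∉ D ∧ s(b,c) ∉ D := by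
  obtain ⟨v, hv⟩ := rem_exists_low_degree m hm D hDedges hcard
  obtain ⟨y, z, hyz, hvy, hvz, evy, evz, eyz⟩ := rem_exists_triangle_at m hm D hcard v hv
  exact ⟨v, y, z, hvy, hvz, hyz, evy, evz, eyz⟩

/-- Claim 2 of the paper's midpoint-recovery lemma: for `m > 6`, after deleting any set
`D` of `m - 1` edges of the complete graph `K_m` that is not a full vertex star, the
incidence vectors `e_i + e_j` of the remaining edges still span `ℝ^m`. -/
theorem remaining_edges_span (m : ℕ) (hm : 6 < m) (D : Finset (Sym2 (Fin m)))
    (hDedges : ∀ p ∈ D, ¬p.IsDiag) (hcard : D.card = m - 1)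
    (hstar : ¬∃ v : Fin m, ∀ p : Sym2 (Fin m), p ∈ D ↔ (¬p.IsDiag ∧ v ∈ p)) :
    Submodule.span ℝ {u : Fin m → ℝ | ∃ i j : Fin m, i ≠ j ∧ s(i, j) ∉ D ∧
      u = Pi.single i 1 + Pi.single j 1} = ⊤ := by
  obtain ⟨a, b, c, hab, hac, hbc, eab, eac, ebc⟩ := rem_exists_triangle m hm D hDedges hcard
  classical
  set S := Submodule.span ℝ {u : Fin m → ℝ | ∃ i j : Fin m, i ≠ j ∧ s(i, j) ∉ D ∧
      u = Pi.single i 1 + Pi.single j 1} with hSdef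
  have hedge : ∀ i j : Fin m, i ≠ j → s(i,j) ∉ D →
      ((Pi.single i 1 : Fin m → ℝ) + Pi.single j 1) ∈ S :=
    fun i j hij hD => Submodule.subset_span ⟨i, j, hij, hD, rfl⟩
  have htri : ∀ x y z : Fin m, x ≠ y → x ≠ z → y ≠ z →
      s(x,y) ∉ D → s(x,z) ∉ D → s(y,z) ∉ D → (Pi.single x 1 : Fin m → ℝ) ∈ S := by
    intro x y z hxy hxz hyz exy exz eyz
    have heq : Pi.single x (1:ℝ) = (2⁻¹:ℝ) •
        ((((Pi.single x 1 : Fin m → ℝ) + Pi.single y 1) + (Pi.single x 1 + Pi.single z 1))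
          - (Pi.single y 1 + Pi.single z 1)) := by
      funext w
      by_cases h1 : w = x <;> by_cases h2 : w = y <;> by_cases h3 : w = z <;>
        simp_all [Pi.single_apply] <;> norm_num
    rw [heq]
    exact Submodule.smul_mem _ _ (Submodule.sub_mem _
      (Submodule.add_mem _ (hedge _ _ hxy exy) (hedge _ _ hxz exz)) (hedge _ _ hyz eyz))
  set T : Finset (Fin m) := Finset.univ.filter (fun x => (Pi.single x 1 : Fin m → ℝ) ∈ S)
    with hT
  have hmemT : ∀ x, x ∈ T ↔ (Pi.single x 1 : Fin m → ℝ) ∈ S := by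
    intro x; simp [hT]
  have hprop : ∀ x ∈ T, ∀ y : Fin m, x ≠ y → s(x,y) ∉ D → y ∈ T := by
    intro x hx y hxy hD
    rw [hmemT] at hx ⊢
    have : (Pi.single y 1 : Fin m → ℝ) = ((Pi.single x 1 : Fin m → ℝ) + Pi.single y 1)
        - Pi.single x 1 := by ring
    rw [this]
    exact Submodule.sub_mem _ (hedge _ _ hxy hD) hx
  have hTuniv : T = Finset.univ := by
    by_contra hne
    -- T contains the triangle
    have haT : a ∈ T := (hmemT a).2 (htri a b c hab hac hbc eab eac ebc)
    have hbT : b ∈ T := (hmemT b).2 (htri b a c hab.symm hbc hac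
      (by rwa [Sym2.eq_swap]) ebc eac)
    have hcT : c ∈ T := (hmemT c).2 (htri c a b hac.symm hbc.symm hab
      (by rwa [Sym2.eq_swap]) (by rwa [Sym2.eq_swap]) eab)
    have h3T : 3 ≤ T.card := by
      have : ({a, b, c} : Finset (Fin m)) ⊆ T := by
        intro x hx; simp only [mem_insert, mem_singleton] at hx
        rcases hx with rfl | rfl | rfl <;> assumption
      calc 3 = ({a, b, c} : Finset (Fin m)).card := by
            rw [Finset.card_insert_of_notMem (by simp [hab, hac]),
              Finset.card_insert_of_notMem (by simp [hbc]), Finset.card_singleton]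
        _ ≤ T.card := Finset.card_le_card this
    -- all cross edges are deleted
    have hcross : ∀ x ∈ T, ∀ y ∈ Finset.univ \ T, s(x,y) ∈ D := by
      intro x hx y hy
      simp only [mem_sdiff, mem_univ, true_and] at hy
      by_contra hD
      have hxy : x ≠ y := fun h => hy (h ▸ hx)
      exact hy (hprop x hx y hxy hD)
    have hmaps : ∀ q ∈ T ×ˢ (Finset.univ \ T), s(q.1, q.2) ∈ D := by
      intro q hq
      rw [Finset.mem_product] at hq
      exact hcross _ hq.1 _ hq.2
    have hinjOn : Set.InjOn (fun q : Fin m × Fin m => s(q.1, q.2))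
        ↑(T ×ˢ (Finset.univ \ T)) := by
      intro q hq q' hq' h
      simp only [Finset.coe_product, Set.mem_prod, mem_coe, mem_sdiff, mem_univ,
        true_and] at hq hq'
      rw [Sym2.eq_iff] at h
      rcases h with ⟨h1, h2⟩ | ⟨h1, h2⟩
      · exact Prod.ext h1 h2
      · exact absurd (h1 ▸ hq.1) hq'.2
    have hinj : T.card * (Finset.univ \ T).card ≤ m - 1 := by
      rw [← hcard, ← Finset.card_product]
      exact Finset.card_le_card_of_injOn _ hmaps hinjOn
    have hu1 : 1 ≤ (Finset.univ \ T).card := by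
      have hx : ∃ x, x ∉ T := by
        by_contra h
        push_neg at h
        exact hne (Finset.eq_univ_of_forall h)
      obtain ⟨x, hx⟩ := hx
      exact Finset.card_pos.2 ⟨x, by simp [Finset.mem_sdiff, hx]⟩
    have htu : T.card + (Finset.univ \ T).card = m := by
      have h1 := Finset.card_sdiff_of_subset (Finset.subset_univ T)
      have h2 := Finset.card_le_univ T
      simp only [Finset.card_univ, Fintype.card_fin] at h1 h2
      omega
    rcases Nat.lt_or_ge (Finset.univ \ T).card 2 with hu | hu
    · -- u = 1 : D is the star of v₀
      have hu1' : (Finset.univ \ T).card = 1 := by omega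
      obtain ⟨v₀, hv₀⟩ := Finset.card_eq_one.1 hu1'
      have hDeq : (T ×ˢ (Finset.univ \ T)).image (fun q : Fin m × Fin m => s(q.1, q.2))
          = D := by
        apply Finset.eq_of_subset_of_card_le
        · intro p hp
          obtain ⟨q, hq, rfl⟩ := Finset.mem_image.1 hp
          exact hmaps q hq
        · rw [Finset.card_image_of_injOn hinjOn, Finset.card_product, hu1', hcard]
          omega
      apply hstar
      refine ⟨v₀, fun p => ⟨fun hp => ?_, fun hp => ?_⟩⟩
      · refine ⟨hDedges p hp, ?_⟩
        rw [← hDeq] at hp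
        obtain ⟨q, hq, rfl⟩ := Finset.mem_image.1 hp
        rw [Finset.mem_product, hv₀, Finset.mem_singleton] at hq
        rw [hq.2]
        exact Sym2.mem_mk_right q.1 v₀
      · obtain ⟨hd, hv⟩ := hp
        induction p using Sym2.inductionOn with
        | hf x y =>
          rw [Sym2.mk_isDiag_iff] at hd
          rw [Sym2.mem_iff] at hv
          have hTmem : ∀ w : Fin m, w ≠ v₀ → w ∈ T := by
            intro w hw
            by_contra hwT
            have : w ∈ Finset.univ \ T := by simp [Finset.mem_sdiff, hwT]
            rw [hv₀, Finset.mem_singleton] at this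
            exact hw this
          have hv₀mem : v₀ ∈ Finset.univ \ T := by rw [hv₀]; exact Finset.mem_singleton_self v₀
          rcases hv with h | h
          · have hy : y ∈ T := hTmem y (fun hy => hd ((hy.trans h).symm))
            rw [Sym2.eq_swap, ← h]
            exact hcross y hy v₀ hv₀mem
          · have hx : x ∈ T := hTmem x (fun hx => hd (hx.trans h))
            rw [← h]
            exact hcross x hx v₀ hv₀mem
    · -- 2 ≤ u : size contradiction
      have hZ1 : (3:ℤ) ≤ (T.card : ℤ) := by exact_mod_cast h3T
      have hZ2 : (2:ℤ) ≤ ((Finset.univ \ T).card : ℤ) := by exact_mod_cast hu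
      have hZ3 : (T.card : ℤ) * ((Finset.univ \ T).card : ℤ) + 1
          ≤ (T.card : ℤ) + ((Finset.univ \ T).card : ℤ) := by
        have : T.card * (Finset.univ \ T).card + 1 ≤ m := by omega
        have h4 : (T.card : ℤ) + ((Finset.univ \ T).card : ℤ) = (m : ℤ) := by
          exact_mod_cast htu
        rw [h4]
        exact_mod_cast this
      nlinarith
  -- conclude
  rw [eq_top_iff]
  intro u _
  rw [pi_eq_sum_univ u]
  apply Submodule.sum_mem
  intro i _
  apply Submodule.smul_mem
  have : (fun j => if i = j then (1:ℝ) else 0) = Pi.single i 1 := by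
    funext j; simp [Pi.single_apply, eq_comm]
  rw [this]
  exact (hmemT i).1 (hTuniv ▸ Finset.mem_univ i)
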